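/- Let f_1, ..., f_n be analytic and zero-free functions on right half-planes Π_{a_i}^+ = {ζ ∈ ℂ : Re ζ > a_i}. If there exists an analytic function f such that f(ζ_1 + ... + ζ_n) = ∏_{i=1}^n f_i(ζ_i) for all ζ_i ∈ Π_{a_i}^+, then there exist complex constants λ and c_1, ..., c_n such that f_i(ζ_i) = c_i e^{λ ζ_i} for each i. -/

import Mathlib

open Complex

theorem stmt_0 (n : ℕ) (hn : 2 ≤ n) (a : Fin n → ℝ) (f : ℂ → ℂ) (F : Fin n → ℂ → ℂ)
    (hF : ∀ i, DifferentiableOn ℂ (F i) {ζ : ℂ | a i < ζ.re})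
    (hFz : ∀ i, ∀ ζ : ℂ, a i < ζ.re → F i ζ ≠ 0)
    (hf : DifferentiableOn ℂ f {w : ℂ | (∑ i, a i) < w.re})
    (heq : ∀ ζ : Fin n → ℂ, (∀ i, a i < (ζ i).re) →
      f (∑ i, ζ i) = ∏ i, F i (ζ i)) :
    ∃ (lam : ℂ) (c : Fin n → ℂ), ∀ i, ∀ ζ : ℂ, a i < ζ.re →
      F i ζ = c i * Complex.exp (lam * ζ) := by
  have hopen : ∀ b : ℝ, IsOpen {ζ : ℂ | b < ζ.re} :=
    fun b => isOpen_lt continuous_const continuous_re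
  have hne : Nonempty (Fin n) := ⟨⟨0, by omega⟩⟩
  have hsum : ∀ ζ : Fin n → ℂ, (∀ i, a i < (ζ i).re) → (∑ i, a i) < (∑ i, ζ i).re := by
    intro ζ hζ
    rw [Complex.re_sum]
    exact Finset.sum_lt_sum_of_nonempty Finset.univ_nonempty (fun i _ => hζ i)
  have hfne : ∀ ζ : Fin n → ℂ, (∀ i, a i < (ζ i).re) → f (∑ i, ζ i) ≠ 0 := by
    intro ζ hζ
    rw [heq ζ hζ]
    exact Finset.prod_ne_zero_iff.2 (fun i _ => hFz i (ζ i) (hζ i))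
  have hkey : ∀ ζ : Fin n → ℂ, (∀ i, a i < (ζ i).re) → ∀ i,
      deriv (F i) (ζ i) / F i (ζ i) = deriv f (∑ j, ζ j) / f (∑ j, ζ j) := by
    intro ζ hζ i
    set c : ℂ := ∑ j ∈ Finset.univ \ {i}, ζ j with hc
    set C : ℂ := ∏ j ∈ Finset.univ \ {i}, F j (ζ j) with hC
    have hsplit : ζ i + c = ∑ j, ζ j := by
      rw [hc, ← Finset.sum_update_of_mem (Finset.mem_univ i) ζ (ζ i)]
      simp [Function.update_eq_self]
    have hS : (∑ i, a i) < (∑ j, ζ j).re := hsum ζ hζ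
    have hfd : HasDerivAt f (deriv f (∑ j, ζ j)) (∑ j, ζ j) :=
      (hf.differentiableAt ((hopen _).mem_nhds hS)).hasDerivAt
    have hφ : HasDerivAt (fun s => f (s + c)) (deriv f (∑ j, ζ j)) (ζ i) := by
      have hfd' : HasDerivAt f (deriv f (∑ j, ζ j)) (ζ i + c) := hsplit ▸ hfd
      have := HasDerivAt.comp (ζ i) hfd' ((hasDerivAt_id (ζ i)).add_const c)
      simp only [mul_one] at this
      exact this
    have hev : (fun s => f (s + c)) =ᶠ[nhds (ζ i)] (fun s => F i s * C) := by
      filter_upwards [(hopen (a i)).mem_nhds (hζ i)] with s hs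
      have hζ' : ∀ j, a j < ((Function.update ζ i s) j).re := by
        intro j
        rcases eq_or_ne j i with rfl | hj
        · simpa using hs
        · simpa [Function.update_of_ne hj] using hζ j
      have h := heq (Function.update ζ i s) hζ'
      rw [Finset.sum_update_of_mem (Finset.mem_univ i) ζ s] at h
      rw [Finset.prod_eq_mul_prod_sdiff_singleton_of_mem (Finset.mem_univ i)
        (fun j => F j (Function.update ζ i s j))] at h
      rw [h, Function.update_self]
      congr 1
      refine Finset.prod_congr rfl (fun j hj => ?_)
      have hj' : j ≠ i := by
        intro hji; simp [hji] at hj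
      rw [Function.update_of_ne hj']
    have hφ' : HasDerivAt (fun s => F i s * C) (deriv f (∑ j, ζ j)) (ζ i) :=
      hφ.congr_of_eventuallyEq hev.symm
    have hFi : HasDerivAt (F i) (deriv (F i) (ζ i)) (ζ i) :=
      ((hF i).differentiableAt ((hopen _).mem_nhds (hζ i))).hasDerivAt
    have huniq : deriv (F i) (ζ i) * C = deriv f (∑ j, ζ j) :=
      (hFi.mul_const C).unique hφ'
    have hFine : F i (ζ i) ≠ 0 := hFz i (ζ i) (hζ i)
    have hfS : f (∑ j, ζ j) = F i (ζ i) * C := by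
      rw [heq ζ hζ]
      exact Finset.prod_eq_mul_prod_sdiff_singleton_of_mem (Finset.mem_univ i) _
    rw [div_eq_div_iff hFine (hfne ζ hζ), ← huniq, hfS]
    ring
  set β : Fin n → ℂ := fun k => (a k : ℂ) + 1 with hβdef
  have hβ : ∀ k, a k < (β k).re := by
    intro k; simp [hβdef]
  set lam := deriv f (∑ k, β k) / f (∑ k, β k) with hlam
  have claim : ∀ i, ∀ z : ℂ, a i < z.re → deriv (F i) z = lam * F i z := by
    intro i z hz
    obtain ⟨j, hj⟩ : ∃ j : Fin n, j ≠ i := by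
      rcases eq_or_ne i ⟨0, by omega⟩ with rfl | h
      · exact ⟨⟨1, by omega⟩, by simp [Fin.ext_iff]⟩
      · exact ⟨⟨0, by omega⟩, Ne.symm h⟩
    set ζ := Function.update β i z with hζdef
    have hζ : ∀ k, a k < (ζ k).re := by
      intro k; rcases eq_or_ne k i with rfl | hk
      · simpa [hζdef] using hz
      · simpa [hζdef, Function.update_of_ne hk] using hβ k
    have h1 := hkey ζ hζ i
    have h2 := hkey ζ hζ j
    have h3 := hkey β hβ j
    rw [hζdef, Function.update_self] at h1
    rw [hζdef, Function.update_of_ne hj] at h2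
    have h4 : deriv (F i) z / F i z = lam := by
      rw [h1, ← h2, h3]
    rw [div_eq_iff (hFz i z hz)] at h4
    exact h4
  refine ⟨lam, fun i => F i (β i) * Complex.exp (-(lam * β i)), ?_⟩
  intro i z hz
  have hH : ∀ w ∈ {ζ : ℂ | a i < ζ.re},
      HasDerivAt (fun s => F i s * Complex.exp (-(lam * s))) 0 w := by
    intro w hw
    have h1 : HasDerivAt (F i) (lam * F i w) w := by
      have := ((hF i).differentiableAt ((hopen _).mem_nhds hw)).hasDerivAt
      rwa [claim i w hw] at this
    have h2 : HasDerivAt (fun s : ℂ => -(lam * s)) (-lam) w := by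
      have := ((hasDerivAt_id w).const_mul lam).neg
      simp only [mul_one] at this
      exact this
    have h3 := h2.cexp
    have h4 : HasDerivAt (fun s => F i s * Complex.exp (-(lam * s))) _ w := h1.mul h3
    convert h4 using 1
    ring
  have hdiff : DifferentiableOn ℂ (fun s => F i s * Complex.exp (-(lam * s)))
      {ζ : ℂ | a i < ζ.re} :=
    fun w hw => ((hH w hw).differentiableAt).differentiableWithinAt
  have hfd0 : ∀ w ∈ {ζ : ℂ | a i < ζ.re},
      fderivWithin ℂ (fun s => F i s * Complex.exp (-(lam * s))) {ζ : ℂ | a i < ζ.re} w = 0 := by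
    intro w hw
    rw [fderivWithin_of_isOpen (hopen _) hw]
    have := (hH w hw).hasFDerivAt.fderiv
    rw [this]
    ext
    simp [ContinuousLinearMap.smulRight_apply]
  have hconst := (convex_halfSpace_re_gt (a i)).is_const_of_fderivWithin_eq_zero
    hdiff hfd0 hz (hβ i)
  have hmul : F i z * Complex.exp (-(lam * z)) =
      F i (β i) * Complex.exp (-(lam * β i)) := hconst
  have hfin : F i z = F i (β i) * Complex.exp (-(lam * β i)) * Complex.exp (lam * z) := by
    rw [← hmul, mul_assoc, ← Complex.exp_add]
    simp
  exact hfin
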